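/- Let 1 ≤ k ≤ n−1 and let A be an n×n matrix of rational functions, each bounded at infinity, which is reduced of order k−1. Then either A_{k,k+1} = A_{k,k+2} = … = A_{k,n} = 0 identically, or else there exists an n×n matrix B of rational functions, each bounded at infinity, such that B is of the same kind as A, B is reduced of order k−1, B_{k,k+1}(∞) ≠ 0, and the constant matrices A(∞) and B(∞) have the same characteristic polynomial, i.e., the same eigenvalues counting algebraic multiplicities. -/

import Mathlib

set_option maxHeartbeats 1000000


open Filter

/-- Evaluation of a rational function at a point of `ℂ`. -/
noncomputable def evalRat (f : RatFunc ℂ) (z : ℂ) : ℂ := f.eval (RingHom.id ℂ) z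

/-- A rational function is bounded at infinity iff the degree of its numerator
does not exceed the degree of its denominator. -/
def BddAtInf (f : RatFunc ℂ) : Prop := f.num.degree ≤ f.denom.degree

/-- The derivative of a rational function, as a rational function. -/
noncomputable def ratDeriv (f : RatFunc ℂ) : RatFunc ℂ :=
  (algebraMap (Polynomial ℂ) (RatFunc ℂ) (Polynomial.derivative f.num) *
      algebraMap (Polynomial ℂ) (RatFunc ℂ) f.denom -
    algebraMap (Polynomial ℂ) (RatFunc ℂ) f.num *
      algebraMap (Polynomial ℂ) (RatFunc ℂ) (Polynomial.derivative f.denom)) /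
  algebraMap (Polynomial ℂ) (RatFunc ℂ) f.denom ^ 2

/-- Two `n × n` matrices of rational functions are of the same kind if there is
an invertible matrix `T` over the field of rational functions with
`B = T⁻¹ (A T − T')`. -/
def SameKind {n : ℕ} (A B : Matrix (Fin n) (Fin n) (RatFunc ℂ)) : Prop :=
  ∃ T : Matrix (Fin n) (Fin n) (RatFunc ℂ), IsUnit T.det ∧
    B = T⁻¹ * (A * T - T.map ratDeriv)

/-- A matrix of rational functions is reduced of order `k` if its rows
`1, …, k` (here: indices `0, …, k-1`) are the corresponding rows of the
companion-type matrix, i.e. `B_{j,ℓ} = δ_{j+1,ℓ}`. -/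
def ReducedOfOrder {n : ℕ} (k : ℕ) (A : Matrix (Fin n) (Fin n) (RatFunc ℂ)) : Prop :=
  ∀ j ℓ : Fin n, (j : ℕ) < k → A j ℓ = if (j : ℕ) + 1 = (ℓ : ℕ) then 1 else 0

open Polynomial

lemma evalRat_eq (f : RatFunc ℂ) (z : ℂ) : evalRat f z = f.num.eval z / f.denom.eval z := rfl

lemma aux_field1 {K : Type*} [Field K] (a b x dv : K) (hb : b ≠ 0) (hx : x ≠ 0) :
    x⁻¹ * (a / b * x - dv) = (a * x - b * dv) / (b * x) := by
  field_simp
  try ring_nf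
  try exact Or.inl trivial

lemma aux_field2 {K : Type*} [Field K] (a b x y : K) (hb : b ≠ 0) (hx : x ≠ 0) :
    x⁻¹ * (a / b * y) = (a * y) / (b * x) := by
  field_simp
  try ring_nf
  try exact Or.inl trivial

lemma eventually_poly_ne_zero (q : Polynomial ℂ) (hq : q ≠ 0) :
    ∀ᶠ z in Bornology.cobounded ℂ, q.eval z ≠ 0 :=
  (Bornology.le_cofinite ℂ) ((Set.finite_coe_iff.1 (Polynomial.finite_setOf_isRoot hq)).eventually_cofinite_notMem)

lemma tendsto_eval_mul_inv_pow (p : Polynomial ℂ) (m : ℕ) (hp : p.degree ≤ (m : ℕ)) :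
    Tendsto (fun z : ℂ => p.eval z * (z⁻¹) ^ m) (Bornology.cobounded ℂ) (nhds (p.coeff m)) := by
  have key : Tendsto (fun z : ℂ => ∑ i ∈ Finset.range (m+1), p.coeff i * (z⁻¹) ^ (m - i))
      (Bornology.cobounded ℂ)
      (nhds (∑ i ∈ Finset.range (m+1), p.coeff i * (0:ℂ) ^ (m - i))) := by
    refine tendsto_finset_sum _ (fun i _ => ?_)
    exact tendsto_const_nhds.mul (Filter.tendsto_inv₀_cobounded.pow _)
  have hsum : (∑ i ∈ Finset.range (m+1), p.coeff i * (0:ℂ) ^ (m - i)) = p.coeff m := by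
    rw [Finset.sum_eq_single m]
    · simp
    · intro i hi hne
      have : 0 < m - i := by
        have := Finset.mem_range.1 hi; omega
      rw [zero_pow (by omega), mul_zero]
    · intro h; exact absurd (Finset.self_mem_range_succ m) h
  rw [hsum] at key
  refine key.congr' ?_
  filter_upwards [Bornology.eventually_ne_cobounded (0:ℂ)] with z hz
  rw [Polynomial.eval_eq_sum_range' (n := m+1) (by
      have := Polynomial.natDegree_le_iff_degree_le.2 hp; omega) z, Finset.sum_mul]
  refine Finset.sum_congr rfl (fun i hi => ?_)
  have him : i ≤ m := by have := Finset.mem_range.1 hi; omega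
  rw [mul_assoc]
  congr 1
  have hpow : (z:ℂ)⁻¹ ^ m = z⁻¹ ^ (m - i) * z⁻¹ ^ i := by
    rw [← pow_add, Nat.sub_add_cancel him]
  calc z⁻¹ ^ (m-i) = z⁻¹ ^ (m-i) * ((z * z⁻¹) ^ i) := by
        rw [mul_inv_cancel₀ hz, one_pow, mul_one]
    _ = z ^ i * z⁻¹ ^ m := by rw [mul_pow, hpow]; ring
lemma tendsto_eval_div (p q : Polynomial ℂ) (hq : q ≠ 0) (hpq : p.degree ≤ q.degree) :
    Tendsto (fun z => p.eval z / q.eval z) (Bornology.cobounded ℂ)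
      (nhds (p.coeff q.natDegree / q.leadingCoeff)) := by
  have h1 := tendsto_eval_mul_inv_pow p q.natDegree
    (hpq.trans (Polynomial.degree_le_natDegree))
  have h2 := tendsto_eval_mul_inv_pow q q.natDegree (Polynomial.degree_le_natDegree)
  have hlc : q.leadingCoeff ≠ 0 := Polynomial.leadingCoeff_ne_zero.2 hq
  have := h1.div h2 hlc
  refine this.congr' ?_
  filter_upwards [Bornology.eventually_ne_cobounded (0:ℂ)] with z hz
  simp only [Pi.div_apply]
  rw [mul_div_mul_right _ _ (pow_ne_zero _ (inv_ne_zero hz))]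

lemma ratfunc_div (p q : Polynomial ℂ) (hq : q ≠ 0) (hpq : p.degree ≤ q.degree) :
    BddAtInf (algebraMap _ (RatFunc ℂ) p / algebraMap _ _ q) ∧
    (∀ᶠ z in Bornology.cobounded ℂ,
       evalRat (algebraMap _ (RatFunc ℂ) p / algebraMap _ _ q) z = p.eval z / q.eval z) ∧
    Tendsto (evalRat (algebraMap _ (RatFunc ℂ) p / algebraMap _ _ q)) (Bornology.cobounded ℂ)
      (nhds (p.coeff q.natDegree / q.leadingCoeff)) := by
  set f : RatFunc ℂ := algebraMap _ (RatFunc ℂ) p / algebraMap _ _ q with hf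
  have hqz : algebraMap (Polynomial ℂ) (RatFunc ℂ) q ≠ 0 := RatFunc.algebraMap_ne_zero hq
  have hbz : algebraMap (Polynomial ℂ) (RatFunc ℂ) f.denom ≠ 0 :=
    RatFunc.algebraMap_ne_zero f.denom_ne_zero
  have key : f.num * q = f.denom * p := by
    have h2 : (algebraMap _ (RatFunc ℂ) f.num) / algebraMap _ _ f.denom
        = algebraMap _ (RatFunc ℂ) p / algebraMap _ _ q := by
      rw [RatFunc.num_div_denom]
    rw [div_eq_div_iff hbz hqz] at h2
    apply RatFunc.algebraMap_injective ℂ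
    rw [map_mul, map_mul, h2]
    ring
  have heval : ∀ᶠ z in Bornology.cobounded ℂ, evalRat f z = p.eval z / q.eval z := by
    filter_upwards [eventually_poly_ne_zero q hq] with z hqev
    have hdev : f.denom.eval z ≠ 0 := by
      intro hd
      have hn : f.num.eval z = 0 := by
        have := congrArg (Polynomial.eval z) key
        simp only [Polynomial.eval_mul, hd, zero_mul] at this
        exact (mul_eq_zero.1 this).resolve_right hqev
      obtain ⟨u, v, huv⟩ := RatFunc.isCoprime_num_denom f
      have := congrArg (Polynomial.eval z) huv
      simp [hn, hd] at this
    rw [evalRat_eq, div_eq_div_iff hdev hqev]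
    have := congrArg (Polynomial.eval z) key
    simpa [Polynomial.eval_mul, mul_comm] using this
  refine ⟨?_, heval, (tendsto_eval_div p q hq hpq).congr' (by
    filter_upwards [heval] with z h using h.symm)⟩
  by_cases hp : p = 0
  · have : f = 0 := by rw [hf, hp, map_zero, zero_div]
    rw [BddAtInf, this]
    simp
  · have hnum : f.num ≠ 0 := by
      intro h0
      rw [h0, zero_mul] at key
      exact hp ((mul_eq_zero.1 key.symm).resolve_left f.denom_ne_zero)
    have hdeg : f.num.degree + q.degree = f.denom.degree + p.degree := by
      rw [← Polynomial.degree_mul, ← Polynomial.degree_mul, key]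
    rw [BddAtInf]
    have h2 : f.num.degree + q.degree ≤ f.denom.degree + q.degree := by
      rw [hdeg]; exact add_le_add_right hpq _
    exact (WithBot.add_le_add_iff_right (Polynomial.degree_ne_bot.2 hq)).1 h2

lemma ratDeriv_algebraMap (p : Polynomial ℂ) :
    ratDeriv (algebraMap _ _ p) = algebraMap _ _ (Polynomial.derivative p) := by
  rw [ratDeriv, RatFunc.num_algebraMap, RatFunc.denom_algebraMap]
  simp

lemma ratDeriv_zero : ratDeriv 0 = 0 := by
  have := ratDeriv_algebraMap 0
  simpa using this

lemma ratDeriv_one : ratDeriv (1 : RatFunc ℂ) = 0 := by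
  have := ratDeriv_algebraMap 1
  simpa using this

lemma charpoly_eval {n : ℕ} (M : Matrix (Fin n) (Fin n) ℂ) (lam : ℂ) :
    M.charpoly.eval lam = (lam • (1 : Matrix (Fin n) (Fin n) ℂ) - M).det := by
  rw [Matrix.charpoly, ← Polynomial.coe_evalRingHom, RingHom.map_det]
  congr 1
  ext i j
  by_cases h : i = j <;>
    simp [h, Matrix.charmatrix_apply, Matrix.diagonal_apply, Matrix.one_apply,
      Matrix.smul_apply, Matrix.sub_apply]

lemma tendsto_det {n : ℕ} (F : ℂ → Matrix (Fin n) (Fin n) ℂ) (Minf : Matrix (Fin n) (Fin n) ℂ)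
    (h : ∀ i j, Tendsto (fun z => F z i j) (Bornology.cobounded ℂ) (nhds (Minf i j))) :
    Tendsto (fun z => (F z).det) (Bornology.cobounded ℂ) (nhds Minf.det) := by
  have hF : Tendsto F (Bornology.cobounded ℂ) (nhds Minf) := by
    exact tendsto_pi_nhds.2 fun i => tendsto_pi_nhds.2 fun j => h i j
  exact ((continuous_id.matrix_det).tendsto Minf).comp hF



/-- Lemma 2.3: if `A` is reduced of order `k-1` (rows and columns numbered
`1, …, n`) and bounded at infinity, then either the entries
`A_{k,k+1}, …, A_{k,n}` all vanish, or there is a matrix `B`, of the same kind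
as `A`, bounded at infinity, reduced of order `k-1`, with `B_{k,k+1}(∞) ≠ 0`,
and such that `A(∞)` and `B(∞)` have the same characteristic polynomial. -/
theorem lemma_same_kind_nonvanishing (n k : ℕ) (hk1 : 1 ≤ k) (hkn : k ≤ n - 1)
    (A : Matrix (Fin n) (Fin n) (RatFunc ℂ))
    (hbdd : ∀ i j, BddAtInf (A i j))
    (Ainf : Matrix (Fin n) (Fin n) ℂ)
    (hAinf : ∀ i j, Tendsto (evalRat (A i j)) (Bornology.cobounded ℂ) (nhds (Ainf i j)))
    (hred : ReducedOfOrder (k - 1) A) :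
    (∀ ℓ : Fin n, k ≤ (ℓ : ℕ) → A ⟨k - 1, by omega⟩ ℓ = 0) ∨
    ∃ (B : Matrix (Fin n) (Fin n) (RatFunc ℂ)) (Binf : Matrix (Fin n) (Fin n) ℂ),
      (∀ i j, BddAtInf (B i j)) ∧
      (∀ i j, Tendsto (evalRat (B i j)) (Bornology.cobounded ℂ) (nhds (Binf i j))) ∧
      SameKind A B ∧
      ReducedOfOrder (k - 1) B ∧
      Binf ⟨k - 1, by omega⟩ ⟨k, by omega⟩ ≠ 0 ∧
      Ainf.charpoly = Binf.charpoly := by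
  classical
  have hn2 : 2 ≤ n := by omega
  by_cases hzero : ∀ ℓ : Fin n, k ≤ (ℓ : ℕ) → A ⟨k - 1, by omega⟩ ℓ = 0
  · exact Or.inl hzero
  right
  set κ : Fin n := ⟨k - 1, by omega⟩ with hκ
  set kk : Fin n := ⟨k, by omega⟩ with hkk
  have hκval : (κ : ℕ) = k - 1 := rfl
  have hkkval : (kk : ℕ) = k := rfl
  have hκk : (κ : ℕ) < k := by omega
  push_neg at hzero
  obtain ⟨ℓ₀, hℓ₀k, hℓ₀⟩ := hzero
  obtain ⟨ℓs, hℓsmem, hmax⟩ := Finset.exists_max_image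
    (Finset.univ.filter fun ℓ : Fin n => k ≤ (ℓ : ℕ) ∧ A κ ℓ ≠ 0)
    (fun ℓ => ((A κ ℓ).num.natDegree : ℤ) - ((A κ ℓ).denom.natDegree : ℤ))
    ⟨ℓ₀, by simp only [Finset.mem_filter, Finset.mem_univ, true_and]; exact ⟨hℓ₀k, hℓ₀⟩⟩
  rw [Finset.mem_filter] at hℓsmem
  obtain ⟨-, hℓsk, hℓsne⟩ := hℓsmem
  have hmax' : ∀ ℓ : Fin n, k ≤ (ℓ : ℕ) → A κ ℓ ≠ 0 →
      ((A κ ℓ).num.natDegree : ℤ) - ((A κ ℓ).denom.natDegree : ℤ) ≤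
        ((A κ ℓs).num.natDegree : ℤ) - ((A κ ℓs).denom.natDegree : ℤ) :=
    fun ℓ h1 h2 => hmax ℓ (Finset.mem_filter.2 ⟨Finset.mem_univ _, h1, h2⟩)
  have hnumls : (A κ ℓs).num ≠ 0 := RatFunc.num_ne_zero hℓsne
  have hbls : (A κ ℓs).num.natDegree ≤ (A κ ℓs).denom.natDegree :=
    Polynomial.natDegree_le_natDegree (hbdd κ ℓs)
  set d : ℕ := (A κ ℓs).denom.natDegree - (A κ ℓs).num.natDegree with hd
  have hdex : (A κ ℓs).num.natDegree + d = (A κ ℓs).denom.natDegree := by omega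
  have hdle : ∀ ℓ : Fin n, k ≤ (ℓ : ℕ) → A κ ℓ ≠ 0 →
      (A κ ℓ).num.natDegree + d ≤ (A κ ℓ).denom.natDegree := by
    intro ℓ h1 h2
    have h3 := hmax' ℓ h1 h2
    have h4 : (A κ ℓ).num.natDegree ≤ (A κ ℓ).denom.natDegree :=
      Polynomial.natDegree_le_natDegree (hbdd κ ℓ)
    omega
  set σ : Equiv.Perm (Fin n) := Equiv.swap kk ℓs with hσ
  have hσfix : ∀ i : Fin n, (i : ℕ) < k → σ i = i := by
    intro i hi
    apply Equiv.swap_apply_of_ne_of_ne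
    · intro h; rw [h] at hi; rw [hkkval] at hi; omega
    · intro h; rw [h] at hi; omega
  have hσk : ∀ i : Fin n, (k ≤ ((σ i) : ℕ)) ↔ (k ≤ (i : ℕ)) := by
    intro i
    by_cases h1 : i = kk
    · subst h1; rw [Equiv.swap_apply_left]
      simp only [hkkval]; omega
    by_cases h2 : i = ℓs
    · subst h2; rw [Equiv.swap_apply_right]
      simp only [hkkval]; omega
    · rw [Equiv.swap_apply_of_ne_of_ne h1 h2]
  set e : Fin n → ℕ := fun i => if k ≤ (i : ℕ) then d else 0 with he
  have heσ : ∀ i, e (σ i) = e i := by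
    intro i; simp only [he]; rw [if_congr (hσk i) rfl rfl]
  set t : Fin n → RatFunc ℂ := fun i => algebraMap _ _ ((X : Polynomial ℂ) ^ (e i)) with ht
  have htne : ∀ i, t i ≠ 0 :=
    fun i => RatFunc.algebraMap_ne_zero (pow_ne_zero _ Polynomial.X_ne_zero)
  set N : Fin n → Fin n → Polynomial ℂ := fun i j => (A (σ i) (σ j)).num with hN
  set Dm : Fin n → Fin n → Polynomial ℂ := fun i j => (A (σ i) (σ j)).denom with hDm
  set P : Fin n → Fin n → Polynomial ℂ := fun i j =>
    N i j * X ^ (e j) -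
      if i = j then Dm i j * Polynomial.derivative ((X : Polynomial ℂ) ^ (e i)) else 0 with hP
  set Q : Fin n → Fin n → Polynomial ℂ := fun i j => Dm i j * X ^ (e i) with hQdef
  have hDne : ∀ i j, Dm i j ≠ 0 := fun i j => (A (σ i) (σ j)).denom_ne_zero
  have hNne : ∀ i j, A (σ i) (σ j) ≠ 0 → N i j ≠ 0 := fun i j h => RatFunc.num_ne_zero h
  have hQne : ∀ i j, Q i j ≠ 0 :=
    fun i j => mul_ne_zero (hDne i j) (pow_ne_zero _ Polynomial.X_ne_zero)
  have hND : ∀ i j, (N i j).degree ≤ (Dm i j).degree := fun i j => hbdd (σ i) (σ j)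
  have hPQ : ∀ i j, (P i j).degree ≤ (Q i j).degree := by
    intro i j
    rw [hP, hQdef]
    refine le_trans (Polynomial.degree_sub_le _ _) (max_le ?_ ?_)
    · rw [Polynomial.degree_mul, Polynomial.degree_mul, Polynomial.degree_X_pow,
        Polynomial.degree_X_pow]
      by_cases hj : k ≤ (j : ℕ)
      · by_cases hi : k ≤ (i : ℕ)
        · simp only [he, hj, hi, if_pos, if_true]
          exact add_le_add_left (hND i j) _
        · by_cases hik : (i : ℕ) < k - 1
          · have hσi : σ i = i := hσfix i (by omega)
            have hz : A (σ i) (σ j) = 0 := by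
              rw [hσi, hred i (σ j) hik, if_neg]
              have hsj := (hσk j).2 hj; omega
            simp only [hN, hz, RatFunc.num_zero, Polynomial.degree_zero]
            simp
          · have hieq : i = κ := Fin.ext (by rw [hκval]; omega)
            have hσi : σ i = κ := by rw [hieq]; exact hσfix κ hκk
            have hsj : k ≤ ((σ j) : ℕ) := (hσk j).2 hj
            by_cases hA0 : A κ (σ j) = 0
            · simp only [hN, hσi, hA0, RatFunc.num_zero, Polynomial.degree_zero]
              simp
            · have hkey := hdle (σ j) hsj hA0
              have hnum0 : (A κ (σ j)).num ≠ 0 := RatFunc.num_ne_zero hA0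
              simp only [hN, hDm, he, if_pos hj, if_neg hi]
              rw [hσi, Polynomial.degree_eq_natDegree hnum0,
                Polynomial.degree_eq_natDegree (A κ (σ j)).denom_ne_zero]
              have : (A κ (σ j)).num.natDegree + d ≤ (A κ (σ j)).denom.natDegree + 0 := by omega
              exact_mod_cast this
      · simp only [he, hj, if_neg, not_false_iff, if_false]
        calc (N i j).degree + ((0 : ℕ) : WithBot ℕ)
            = (N i j).degree := by rw [Nat.cast_zero, add_zero]
          _ ≤ (Dm i j).degree := hND i j
          _ ≤ (Dm i j).degree + (if k ≤ (i : ℕ) then d else 0 : ℕ) := by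
              refine le_add_of_nonneg_right ?_
              exact_mod_cast Nat.zero_le _
    · split_ifs with hij
      · rw [Polynomial.degree_mul, Polynomial.degree_mul, Polynomial.degree_X_pow]
        exact add_le_add_right (degree_derivative_le.trans (Polynomial.degree_X_pow _).le) _
      · simp
  have pk := fun i j => ratfunc_div (P i j) (Q i j) (hQne i j) (hPQ i j)
  set B : Matrix (Fin n) (Fin n) (RatFunc ℂ) := Matrix.of fun i j =>
    (t i)⁻¹ * (A (σ i) (σ j) * t j - if i = j then ratDeriv (t i) else 0) with hB
  have hBPQ : ∀ i j, B i j =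
      algebraMap _ _ (P i j) / algebraMap _ (RatFunc ℂ) (Q i j) := by
    intro i j
    have hAij : A (σ i) (σ j) = algebraMap _ _ (N i j) / algebraMap _ _ (Dm i j) :=
      (RatFunc.num_div_denom _).symm
    have h1 : algebraMap _ (RatFunc ℂ) (Dm i j) ≠ 0 := RatFunc.algebraMap_ne_zero (hDne i j)
    have h2 : algebraMap _ (RatFunc ℂ) ((X : Polynomial ℂ) ^ (e i)) ≠ 0 :=
      RatFunc.algebraMap_ne_zero (pow_ne_zero _ Polynomial.X_ne_zero)
    rw [hB]
    simp only [Matrix.of_apply]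
    by_cases hij : i = j
    · subst hij
      have hPexp : P i i = N i i * X ^ e i -
          Dm i i * Polynomial.derivative ((X : Polynomial ℂ) ^ e i) := by
        simp only [hP, if_pos rfl, eq_self_iff_true, if_true]
      have hQexp : Q i i = Dm i i * X ^ e i := by simp only [hQdef]
      rw [hPexp, hQexp, if_pos rfl]
      simp only [map_sub, map_mul]
      rw [hAij]
      have hti : t i = algebraMap _ (RatFunc ℂ) ((X : Polynomial ℂ) ^ e i) := by
        simp only [ht]
      rw [hti, ratDeriv_algebraMap]
      exact aux_field1 _ _ _ _ h1 h2
    · have hPexp : P i j = N i j * X ^ e j := by simp only [hP, if_neg hij, sub_zero]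
      have hQexp : Q i j = Dm i j * X ^ e i := by simp only [hQdef]
      rw [hPexp, hQexp, if_neg hij, sub_zero]
      simp only [map_mul]
      rw [hAij]
      have hti : t i = algebraMap _ (RatFunc ℂ) ((X : Polynomial ℂ) ^ e i) := by
        simp only [ht]
      have htj : t j = algebraMap _ (RatFunc ℂ) ((X : Polynomial ℂ) ^ e j) := by
        simp only [ht]
      rw [hti, htj]
      exact aux_field2 _ _ _ _ h1 h2
  set Binf : Matrix (Fin n) (Fin n) ℂ := Matrix.of fun i j =>
    (P i j).coeff ((Q i j).natDegree) / (Q i j).leadingCoeff with hBinf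
  have hTendB : ∀ i j, Tendsto (evalRat (B i j)) (Bornology.cobounded ℂ) (nhds (Binf i j)) := by
    intro i j
    have := (pk i j).2.2
    rw [← hBPQ i j] at this
    exact this
  refine ⟨B, Binf, ?_, hTendB, ?_, ?_, ?_, ?_⟩
  · intro i j; rw [hBPQ i j]; exact (pk i j).1
  · -- SameKind
    set T : Matrix (Fin n) (Fin n) (RatFunc ℂ) :=
      Matrix.of (fun i j => if i = σ j then t j else 0) with hT
    set U : Matrix (Fin n) (Fin n) (RatFunc ℂ) :=
      Matrix.of (fun i j => if σ i = j then (t i)⁻¹ else 0) with hU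
    have hUT : U * T = 1 := by
      ext i j
      rw [Matrix.mul_apply, Matrix.one_apply]
      simp only [hU, hT, Matrix.of_apply, ite_mul, zero_mul]
      rw [Finset.sum_ite_eq, if_pos (Finset.mem_univ _)]
      by_cases hij : i = j
      · subst hij; rw [if_pos rfl, if_pos rfl, inv_mul_cancel₀ (htne i)]
      · rw [if_neg (fun h => hij (σ.injective h)), if_neg hij, mul_zero]
    refine ⟨T, Matrix.isUnit_det_of_left_inverse hUT, ?_⟩
    rw [Matrix.inv_eq_left_inv hUT]
    ext i j
    rw [Matrix.mul_apply]
    have hTm : ∀ m, (A * T - T.map ratDeriv) m j =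
        A m (σ j) * t j - if m = σ j then ratDeriv (t j) else 0 := by
      intro m
      rw [Matrix.sub_apply, Matrix.mul_apply, Matrix.map_apply]
      congr 1
      · simp only [hT, Matrix.of_apply, mul_ite, mul_zero]
        rw [Finset.sum_ite_eq', if_pos (Finset.mem_univ _)]
      · simp only [hT, Matrix.of_apply, apply_ite ratDeriv, ratDeriv_zero]
    simp only [hU, Matrix.of_apply, ite_mul, zero_mul]
    rw [Finset.sum_ite_eq, if_pos (Finset.mem_univ _), hTm]
    have hcong : (if σ i = σ j then ratDeriv (t j) else 0)
        = (if i = j then ratDeriv (t i) else 0) := by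
      by_cases hij : i = j
      · subst hij; rw [if_pos rfl, if_pos rfl]
      · rw [if_neg (fun h => hij (σ.injective h)), if_neg hij]
    rw [hcong, hB]
    simp only [Matrix.of_apply]
  · -- Reduced
    intro i j hij
    have hik : (i : ℕ) < k := by omega
    have hσi : σ i = i := hσfix i hik
    have hei : e i = 0 := by simp only [he]; rw [if_neg (by omega)]
    have hti : t i = 1 := by simp only [ht, hei, pow_zero, map_one]
    have hrd : ratDeriv (t i) = 0 := by
      simp only [ht, ratDeriv_algebraMap, hei, pow_zero, Polynomial.derivative_one, map_zero]
    rw [hB]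
    simp only [Matrix.of_apply, hti, hrd, ratDeriv_one, inv_one, one_mul, hσi, ite_self,
      sub_zero]
    by_cases hjk : k ≤ (j : ℕ)
    · have hsj : k ≤ ((σ j) : ℕ) := (hσk j).2 hjk
      have hz : A i (σ j) = 0 := by
        rw [hred i (σ j) hij, if_neg]; omega
      rw [hz, zero_mul, if_neg (by omega)]
    · have hσj : σ j = j := hσfix j (by omega)
      have hej : e j = 0 := by simp only [he]; rw [if_neg (by omega)]
      have htj : t j = 1 := by simp only [ht, hej, pow_zero, map_one]
      rw [hσj, htj, mul_one]
      exact hred i j hij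
  · -- nonvanishing
    have hκkk : κ ≠ kk := by
      intro h
      have h2 := congrArg (Fin.val) h
      rw [hκval, hkkval] at h2; omega
    have hσκ : σ κ = κ := hσfix κ hκk
    have hσkk : σ kk = ℓs := Equiv.swap_apply_left kk ℓs
    have heκ : e κ = 0 := by simp only [he]; rw [if_neg (by omega)]
    have hekk : e kk = d := by simp only [he]; rw [if_pos (le_refl k)]
    have hPexp : P κ kk = (A κ ℓs).num * X ^ d := by
      simp only [hP, if_neg hκkk, sub_zero, hN, hσκ, hσkk, hekk]
    have hQexp : Q κ kk = (A κ ℓs).denom := by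
      simp only [hQdef, hDm, hσκ, hσkk, heκ, pow_zero, mul_one]
    show Binf κ kk ≠ 0
    rw [hBinf]
    simp only [Matrix.of_apply]
    rw [hPexp, hQexp, ← hdex, Polynomial.coeff_mul_X_pow, Polynomial.coeff_natDegree]
    exact div_ne_zero (Polynomial.leadingCoeff_ne_zero.2 hnumls)
      (Polynomial.leadingCoeff_ne_zero.2 (A κ ℓs).denom_ne_zero)
  · -- charpoly
    apply Polynomial.funext
    intro lam
    rw [charpoly_eval, charpoly_eval]
    set Mz : ℂ → Matrix (Fin n) (Fin n) ℂ := fun z => Matrix.of fun i j =>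
      evalRat (A i j) z - z⁻¹ * (if i = j then (e i : ℂ) else 0) with hMz
    set evB : ℂ → Matrix (Fin n) (Fin n) ℂ := fun z => Matrix.of fun i j =>
      evalRat (B i j) z with hevB
    have hL : Tendsto (fun z => (lam • (1 : Matrix (Fin n) (Fin n) ℂ) - Mz z).det)
        (Bornology.cobounded ℂ) (nhds ((lam • (1 : Matrix (Fin n) (Fin n) ℂ) - Ainf).det)) := by
      apply tendsto_det
      intro i j
      simp only [Matrix.sub_apply, Matrix.smul_apply, Matrix.one_apply, hMz, Matrix.of_apply,
        smul_eq_mul]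
      have h0 : Tendsto (fun z : ℂ => z⁻¹ * (if i = j then (e i : ℂ) else 0))
          (Bornology.cobounded ℂ) (nhds 0) := by
        simpa using Filter.tendsto_inv₀_cobounded.mul
          (tendsto_const_nhds (x := if i = j then (e i : ℂ) else 0))
      simpa using tendsto_const_nhds.sub ((hAinf i j).sub h0)
    have hR : Tendsto (fun z => (lam • (1 : Matrix (Fin n) (Fin n) ℂ) - evB z).det)
        (Bornology.cobounded ℂ) (nhds ((lam • (1 : Matrix (Fin n) (Fin n) ℂ) - Binf).det)) := by
      apply tendsto_det
      intro i j
      simp only [Matrix.sub_apply, Matrix.smul_apply, Matrix.one_apply, hevB, Matrix.of_apply,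
        smul_eq_mul]
      exact tendsto_const_nhds.sub (hTendB i j)
    have ev3 : ∀ᶠ z in Bornology.cobounded ℂ, ∀ i j : Fin n,
        evalRat (B i j) z = (P i j).eval z / (Q i j).eval z := by
      refine eventually_all.2 fun i => eventually_all.2 fun j => ?_
      have h := (pk i j).2.1
      rw [← hBPQ i j] at h
      exact h
    have ev2 : ∀ᶠ z in Bornology.cobounded ℂ, ∀ i j : Fin n, (Dm i j).eval z ≠ 0 :=
      eventually_all.2 fun i => eventually_all.2 fun j =>
        eventually_poly_ne_zero _ (hDne i j)
    have hEq : ∀ᶠ z in Bornology.cobounded ℂ,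
        (lam • (1 : Matrix (Fin n) (Fin n) ℂ) - evB z).det
          = (lam • (1 : Matrix (Fin n) (Fin n) ℂ) - Mz z).det := by
      filter_upwards [ev3, ev2, Bornology.eventually_ne_cobounded (0 : ℂ)] with z h3 h2 hz
      have hmain : (lam • (1 : Matrix (Fin n) (Fin n) ℂ) - evB z) =
          (Matrix.diagonal (fun i => ((z : ℂ) ^ (e i))⁻¹) *
            (lam • (1 : Matrix (Fin n) (Fin n) ℂ) - Mz z) *
              Matrix.diagonal (fun i => (z : ℂ) ^ (e i))).submatrix σ σ := by
        ext i j
        rw [Matrix.submatrix_apply, Matrix.mul_diagonal, Matrix.diagonal_mul]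
        simp only [Matrix.sub_apply, Matrix.smul_apply, Matrix.one_apply, hevB, hMz,
          Matrix.of_apply, smul_eq_mul]
        rw [h3 i j]
        have hDev : (Dm i j).eval z ≠ 0 := h2 i j
        have hQev : (Q i j).eval z = (Dm i j).eval z * z ^ (e i) := by
          simp only [hQdef]
          rw [Polynomial.eval_mul, Polynomial.eval_pow, Polynomial.eval_X]
        have hAev : evalRat (A (σ i) (σ j)) z = (N i j).eval z / (Dm i j).eval z := by
          simp only [hN, hDm, evalRat_eq]
        have hone : (if σ i = σ j then (1 : ℂ) else 0) = (if i = j then 1 else 0) := by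
          by_cases h : i = j
          · rw [if_pos h, if_pos (by rw [h])]
          · rw [if_neg h, if_neg (fun hh => h (σ.injective hh))]
        have hitee : (if σ i = σ j then ((e (σ i)) : ℂ) else 0)
            = (if i = j then (e i : ℂ) else 0) := by
          by_cases h : i = j
          · rw [if_pos (by rw [h]), if_pos h, heσ]
          · rw [if_neg h, if_neg (fun hh => h (σ.injective hh))]
        have hPev : (P i j).eval z = (N i j).eval z * z ^ (e j) -
            (if i = j then (Dm i j).eval z * ((e i : ℂ) * z ^ (e i - 1)) else 0) := by
          simp only [hP]
          rw [Polynomial.eval_sub]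
          congr 1
          · rw [Polynomial.eval_mul, Polynomial.eval_pow, Polynomial.eval_X]
          · split_ifs with h
            · rw [Polynomial.eval_mul, Polynomial.derivative_X_pow, Polynomial.eval_mul,
                Polynomial.eval_C, Polynomial.eval_pow, Polynomial.eval_X]
            · rw [Polynomial.eval_zero]
        rw [hPev, hQev, hAev, hone, hitee, heσ i, heσ j]
        by_cases hij : i = j
        · subst hij
          rw [if_pos rfl, if_pos rfl, if_pos rfl]
          rcases Nat.eq_zero_or_pos (e i) with hm | hm
          · rw [hm]
            simp only [pow_zero, Nat.zero_sub, Nat.cast_zero, zero_mul, mul_zero, sub_zero,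
              mul_one, inv_one, one_mul]
            try field_simp
            try ring
            try exact Or.inl trivial
          · obtain ⟨m, hm'⟩ : ∃ m, e i = m + 1 := ⟨e i - 1, by omega⟩
            rw [hm']
            simp only [Nat.add_sub_cancel]
            field_simp
            ring
        · rw [if_neg hij, if_neg hij, if_neg hij]
          field_simp
          try ring
          try exact Or.inl trivial
      rw [hmain, Matrix.det_submatrix_equiv_self, Matrix.det_mul, Matrix.det_mul,
        Matrix.det_diagonal, Matrix.det_diagonal]
      have hprod : (∏ i : Fin n, ((z : ℂ) ^ e i)⁻¹) * ∏ i : Fin n, (z : ℂ) ^ e i = 1 := by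
        rw [← Finset.prod_mul_distrib]
        exact Finset.prod_eq_one fun i _ => inv_mul_cancel₀ (pow_ne_zero _ hz)
      calc (∏ i : Fin n, ((z : ℂ) ^ e i)⁻¹) *
            (lam • (1 : Matrix (Fin n) (Fin n) ℂ) - Mz z).det * ∏ i : Fin n, (z : ℂ) ^ e i
          = ((∏ i : Fin n, ((z : ℂ) ^ e i)⁻¹) * ∏ i : Fin n, (z : ℂ) ^ e i) *
            (lam • (1 : Matrix (Fin n) (Fin n) ℂ) - Mz z).det := by ring
        _ = (lam • (1 : Matrix (Fin n) (Fin n) ℂ) - Mz z).det := by rw [hprod, one_mul]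
    exact tendsto_nhds_unique hL (Filter.Tendsto.congr' hEq hR)
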